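/- Let G be a graph that is independent of type 2 and let H be a proper subgraph of G with f(H) = 2. (a) If the contraction G/H is a simple graph (no loops or parallel edges arise), then G/H is independent of type 2. (b) If, in addition, H is maximal with respect to inclusion among subgraphs of G with freedom number equal to 2, then H is a vertex-induced subgraph of G and G/H is a simple graph. -/

import Mathlib

open SimpleGraph

noncomputable section

/-- The freedom number `f(H) = 2|V(H)| - |E(H)|` of a subgraph. -/
def subFreedom {V : Type} {G : SimpleGraph V} (H : G.Subgraph) : ℤ :=
  2 * (H.verts.ncard : ℤ) - (H.edgeSet.ncard : ℤ)

/-- The freedom number `f(G) = 2|V| - |E|` of a graph. -/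
def gFreedom {V : Type} (G : SimpleGraph V) : ℤ :=
  2 * ((Set.univ : Set V).ncard : ℤ) - (G.edgeSet.ncard : ℤ)

/-- `G` is independent of type 2: every subgraph (with nonempty vertex set)
has freedom number at least 2. -/
def Indep2 {V : Type} (G : SimpleGraph V) : Prop :=
  ∀ H : G.Subgraph, H.verts.Nonempty → 2 ≤ subFreedom H

/-- `G` is maximally independent of type 2. -/
def MaxIndep2 {V : Type} (G : SimpleGraph V) : Prop := Indep2 G ∧ gFreedom G = 2

/-- `G` is independent of type 3: every subgraph with at least one edge
has freedom number at least 3. -/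
def Indep3 {V : Type} (G : SimpleGraph V) : Prop :=
  ∀ H : G.Subgraph, H.edgeSet.Nonempty → 3 ≤ subFreedom H

/-- `G` is maximally independent of type 3. -/
def MaxIndep3 {V : Type} (G : SimpleGraph V) : Prop := Indep3 G ∧ gFreedom G = 3

/-- A Laman graph: connected and maximally independent of type 3. -/
def Laman {V : Type} (G : SimpleGraph V) : Prop := G.Connected ∧ MaxIndep3 G

/-- Henneberg 1 move: `G'` (on vertex type `β`) is obtained from `G` (on `α`)
via the vertex embedding `φ` by adjoining the new vertex `w` joined to the images
of two distinct vertices `a`, `b` of `G`. -/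
def Henneberg1Rel {α β : Type} (G : SimpleGraph α) (G' : SimpleGraph β)
    (φ : α ↪ β) (w : β) : Prop :=
  (∀ y : β, y ∈ Set.range φ ∨ y = w) ∧ w ∉ Set.range φ ∧
  ∃ a b : α, a ≠ b ∧
    ∀ x y : β, G'.Adj x y ↔
      ((∃ c d : α, G.Adj c d ∧ x = φ c ∧ y = φ d) ∨
       (x = w ∧ (y = φ a ∨ y = φ b)) ∨ (y = w ∧ (x = φ a ∨ x = φ b)))

/-- Henneberg 2 move: `G'` is obtained from `G` by breaking the edge `(u,v)` of `G`
at the new vertex `w` and adding an edge from `w` to a third vertex `z`. -/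
def Henneberg2Rel {α β : Type} (G : SimpleGraph α) (G' : SimpleGraph β)
    (φ : α ↪ β) (w : β) : Prop :=
  (∀ y : β, y ∈ Set.range φ ∨ y = w) ∧ w ∉ Set.range φ ∧
  ∃ u v z : α, G.Adj u v ∧ z ≠ u ∧ z ≠ v ∧
    ∀ x y : β, G'.Adj x y ↔
      ((∃ a b : α, G.Adj a b ∧ ¬ (s(a, b) = s(u, v)) ∧ x = φ a ∧ y = φ b) ∨
       (x = w ∧ (y = φ u ∨ y = φ v ∨ y = φ z)) ∨
       (y = w ∧ (x = φ u ∨ x = φ v ∨ x = φ z)))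

def finCastSuccEmb (n : ℕ) : Fin n ↪ Fin (n + 1) :=
  ⟨Fin.castSucc, Fin.castSucc_injective n⟩

/-- `Derived G0 n G` : the graph `G` on `Fin n` is obtained from the base graph `G0`
by a finite sequence of Henneberg 1 and Henneberg 2 moves. -/
inductive Derived {m : ℕ} (G0 : SimpleGraph (Fin m)) : (n : ℕ) → SimpleGraph (Fin n) → Prop
  | base : Derived G0 m G0
  | h1 {n : ℕ} {G : SimpleGraph (Fin n)} {G' : SimpleGraph (Fin (n + 1))} :
      Derived G0 n G → Henneberg1Rel G G' (finCastSuccEmb n) (Fin.last n) →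
      Derived G0 (n + 1) G'
  | h2 {n : ℕ} {G : SimpleGraph (Fin n)} {G' : SimpleGraph (Fin (n + 1))} :
      Derived G0 n G → Henneberg2Rel G G' (finCastSuccEmb n) (Fin.last n) →
      Derived G0 (n + 1) G'

/-- The contraction `G/H` of the subgraph `H` of `G` to a single new vertex
(`none` plays the role of `v*`): vertices are the vertices of `G` outside `H`
together with `v*`; two old vertices are adjacent iff they are adjacent in `G`,
and an old vertex is adjacent to `v*` iff it is adjacent in `G` to some vertex
of `H`. -/
def contractGraph {V : Type} (G : SimpleGraph V) (H : G.Subgraph) :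
    SimpleGraph (Option {v : V // v ∉ H.verts}) where
  Adj x y :=
    match x, y with
    | some a, some b => G.Adj a.val b.val
    | some a, none => ∃ w ∈ H.verts, G.Adj a.val w
    | none, some b => ∃ w ∈ H.verts, G.Adj b.val w
    | none, none => False
  symm := by
    constructor
    rintro (_ | a) (_ | b) h
    · exact h.elim
    · exact h
    · exact h
    · exact h.symm
  loopless := by
    constructor
    rintro (_ | a) h
    · exact h
    · exact G.loopless.irrefl _ h

/-- The contraction `G/H` produces a simple graph: no loops arise (every edge of
`G` inside `V(H)` is an edge of `H`) and no parallel edges arise (no vertex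
outside `H` has two distinct neighbours in `H`). -/
def ContractionIsSimple {V : Type} (G : SimpleGraph V) (H : G.Subgraph) : Prop :=
  (∀ a b : V, a ∈ H.verts → b ∈ H.verts → G.Adj a b → H.Adj a b) ∧
  (∀ x : V, x ∉ H.verts → ∀ w₁ w₂ : V, w₁ ∈ H.verts → w₂ ∈ H.verts →
    G.Adj x w₁ → G.Adj x w₂ → w₁ = w₂)

section ContractionAux

variable {V : Type} {G : SimpleGraph V}

-- A chosen neighbour (inside `H.verts`) of a vertex, when one exists.
open Classical in
def wsel (H : G.Subgraph) (a : V) : V :=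
  if h : ∃ u ∈ H.verts, G.Adj a u then h.choose else a

lemma wsel_spec (H : G.Subgraph) {a : V} (h : ∃ u ∈ H.verts, G.Adj a u) :
    wsel H a ∈ H.verts ∧ G.Adj a (wsel H a) := by
  rw [wsel, dif_pos h]
  exact ⟨h.choose_spec.1, h.choose_spec.2⟩

/-- A symmetric function projecting potential edges of the contraction back to
pairs of vertices of `G`. -/
def psiFun (H : G.Subgraph) (d : V) :
    Option {v : V // v ∉ H.verts} → Option {v : V // v ∉ H.verts} → Sym2 V
  | some a, some b => s(a.1, b.1)
  | some a, none => s(a.1, wsel H a.1)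
  | none, some b => s(b.1, wsel H b.1)
  | none, none => s(d, d)

/-- Projection of edges of the contraction back to edges of `G`. -/
def psi (H : G.Subgraph) (d : V) : Sym2 (Option {v : V // v ∉ H.verts}) → Sym2 V :=
  Sym2.lift ⟨psiFun H d, by rintro (_ | a) (_ | b) <;> simp [psiFun, Sym2.eq_swap]⟩

@[simp] lemma psi_mk (H : G.Subgraph) (d : V) (x y : Option {v : V // v ∉ H.verts}) :
    psi H d s(x, y) = psiFun H d x y := rfl

lemma contract_adj_some_some (H : G.Subgraph) {a b : {v : V // v ∉ H.verts}}
    (h : (contractGraph G H).Adj (some a) (some b)) : G.Adj a.1 b.1 := h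

lemma contract_adj_some_none (H : G.Subgraph) {a : {v : V // v ∉ H.verts}}
    (h : (contractGraph G H).Adj (some a) none) : ∃ u ∈ H.verts, G.Adj a.1 u := by
  obtain ⟨w, hw, hadj⟩ := h
  exact ⟨w, hw, hadj⟩

/-- Normal form for edges of a subgraph of the contraction. -/
lemma edge_normal {H : G.Subgraph} {K' : (contractGraph G H).Subgraph} {e : Sym2 _}
    (he : e ∈ K'.edgeSet) :
    (∃ a b, K'.Adj (some a) (some b) ∧ e = s(some a, some b)) ∨
    (∃ a, K'.Adj (some a) none ∧ e = s(some a, none)) := by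
  induction e using Sym2.ind with
  | _ x y =>
    rw [Subgraph.mem_edgeSet] at he
    rcases x with _ | a <;> rcases y with _ | b
    · exact ((K'.adj_sub he).elim)
    · exact Or.inr ⟨b, K'.adj_symm he, Sym2.eq_swap⟩
    · exact Or.inr ⟨a, he, rfl⟩
    · exact Or.inl ⟨a, b, he, rfl⟩

/-- `psi` is injective on the edge set of any subgraph of the contraction. -/
lemma psi_injOn (H : G.Subgraph) (d : V) (K' : (contractGraph G H).Subgraph) :
    Set.InjOn (psi H d) K'.edgeSet := by
  intro e1 h1 e2 h2 heq
  rcases edge_normal h1 with ⟨a, b, hab, rfl⟩ | ⟨a, ha, rfl⟩ <;>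
    rcases edge_normal h2 with ⟨c, d', hcd, rfl⟩ | ⟨c, hc, rfl⟩ <;>
      simp only [psi_mk, psiFun, Sym2.eq_iff] at heq ⊢
  · rcases heq with ⟨h1', h2'⟩ | ⟨h1', h2'⟩
    · exact Or.inl ⟨congrArg some (Subtype.ext h1'), congrArg some (Subtype.ext h2')⟩
    · exact Or.inr ⟨congrArg some (Subtype.ext h1'), congrArg some (Subtype.ext h2')⟩
  · have hw := (wsel_spec H (contract_adj_some_none H (K'.adj_sub hc))).1
    rcases heq with ⟨-, h2'⟩ | ⟨h1', -⟩
    · exact absurd (h2'.symm ▸ hw) b.2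
    · exact absurd (h1'.symm ▸ hw) a.2
  · have hw := (wsel_spec H (contract_adj_some_none H (K'.adj_sub ha))).1
    rcases heq with ⟨-, h2'⟩ | ⟨-, h2'⟩
    · exact absurd (h2' ▸ hw) d'.2
    · exact absurd (h2' ▸ hw) c.2
  · have hwc := (wsel_spec H (contract_adj_some_none H (K'.adj_sub hc))).1
    rcases heq with ⟨h1', -⟩ | ⟨h1', -⟩
    · exact Or.inl ⟨congrArg some (Subtype.ext h1'), trivial⟩
    · exact absurd (h1'.symm ▸ hwc) a.2

/-- The lift of a subgraph of the contraction not containing `v*` back to `G`. -/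
def liftSub0 (H : G.Subgraph) (K' : (contractGraph G H).Subgraph) : G.Subgraph where
  verts := Subtype.val '' {a : {v : V // v ∉ H.verts} | some a ∈ K'.verts}
  Adj a b := ∃ a' b', K'.Adj (some a') (some b') ∧ a = a'.1 ∧ b = b'.1
  adj_sub := by
    rintro a b ⟨a', b', h, rfl, rfl⟩
    exact contract_adj_some_some H (K'.adj_sub h)
  edge_vert := by
    rintro a b ⟨a', b', h, rfl, rfl⟩
    exact ⟨a', K'.edge_vert h, rfl⟩
  symm := by
    constructor
    rintro a b ⟨a', b', h, rfl, rfl⟩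
    exact ⟨b', a', K'.adj_symm h, rfl, rfl⟩

/-- The lift of a subgraph of the contraction containing `v*` back to `G`:
take all its old vertices and edges (re-attaching edges at `v*` via `wsel`)
together with the whole of `H`. -/
def liftSub (H : G.Subgraph) (K' : (contractGraph G H).Subgraph) : G.Subgraph where
  verts := Subtype.val '' {a : {v : V // v ∉ H.verts} | some a ∈ K'.verts} ∪ H.verts
  Adj a b := H.Adj a b ∨
    (∃ a' b', K'.Adj (some a') (some b') ∧ a = a'.1 ∧ b = b'.1) ∨
    (∃ a', K'.Adj (some a') none ∧ a = a'.1 ∧ b = wsel H a'.1) ∨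
    (∃ b', K'.Adj (some b') none ∧ b = b'.1 ∧ a = wsel H b'.1)
  adj_sub := by
    rintro a b (h | ⟨a', b', h, rfl, rfl⟩ | ⟨a', h, rfl, rfl⟩ | ⟨b', h, rfl, rfl⟩)
    · exact H.adj_sub h
    · exact contract_adj_some_some H (K'.adj_sub h)
    · exact (wsel_spec H (contract_adj_some_none H (K'.adj_sub h))).2
    · exact ((wsel_spec H (contract_adj_some_none H (K'.adj_sub h))).2).symm
  edge_vert := by
    rintro a b (h | ⟨a', b', h, rfl, rfl⟩ | ⟨a', h, rfl, rfl⟩ | ⟨b', h, rfl, rfl⟩)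
    · exact Or.inr (H.edge_vert h)
    · exact Or.inl ⟨a', K'.edge_vert h, rfl⟩
    · exact Or.inl ⟨a', K'.edge_vert h, rfl⟩
    · exact Or.inr (wsel_spec H (contract_adj_some_none H (K'.adj_sub h))).1
  symm := by
    constructor
    rintro a b (h | ⟨a', b', h, rfl, rfl⟩ | ⟨a', h, rfl, rfl⟩ | ⟨b', h, rfl, rfl⟩)
    · exact Or.inl (H.adj_symm h)
    · exact Or.inr (Or.inl ⟨b', a', K'.adj_symm h, rfl, rfl⟩)
    · exact Or.inr (Or.inr (Or.inr ⟨a', h, rfl, rfl⟩))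
    · exact Or.inr (Or.inr (Or.inl ⟨b', h, rfl, rfl⟩))

/-- Adding one `G`-edge to a subgraph. -/
def addEdge (H : G.Subgraph) (v w : V) (h : G.Adj v w) : G.Subgraph where
  verts := insert v (insert w H.verts)
  Adj a b := H.Adj a b ∨ (a = v ∧ b = w) ∨ (a = w ∧ b = v)
  adj_sub := by
    rintro a b (hab | ⟨rfl, rfl⟩ | ⟨rfl, rfl⟩)
    · exact H.adj_sub hab
    · exact h
    · exact h.symm
  edge_vert := by
    rintro a b (hab | ⟨rfl, rfl⟩ | ⟨rfl, rfl⟩)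
    · exact Set.mem_insert_iff.2 (Or.inr (Set.mem_insert_iff.2 (Or.inr (H.edge_vert hab))))
    · exact Set.mem_insert _ _
    · exact Set.mem_insert_iff.2 (Or.inr (Set.mem_insert _ _))
  symm := by
    constructor
    rintro a b (hab | ⟨rfl, rfl⟩ | ⟨rfl, rfl⟩)
    · exact Or.inl (H.adj_symm hab)
    · exact Or.inr (Or.inr ⟨rfl, rfl⟩)
    · exact Or.inr (Or.inl ⟨rfl, rfl⟩)

lemma addEdge_edgeSet (H : G.Subgraph) (v w : V) (h : G.Adj v w) :
    (addEdge H v w h).edgeSet = insert s(v, w) H.edgeSet := by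
  ext e
  induction e using Sym2.ind with
  | _ a b =>
    simp only [Subgraph.mem_edgeSet, addEdge, Set.mem_insert_iff, Sym2.eq_iff]
    tauto

lemma le_addEdge (H : G.Subgraph) (v w : V) (h : G.Adj v w) : H ≤ addEdge H v w h :=
  ⟨fun x hx => Set.mem_insert_iff.2 (Or.inr (Set.mem_insert_iff.2 (Or.inr hx))),
   fun _ _ hab => Or.inl hab⟩

end ContractionAux

/-- Let `G` be independent of type 2 and `H` a proper subgraph
with `f(H) = 2`.  (a) If the contraction `G/H` is a simple graph then it is
independent of type 2.  (b) If `H` is maximal with respect to inclusion among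
subgraphs with freedom number 2 then `H` is vertex-induced and `G/H` is simple. -/
theorem contraction_indep2 {V : Type} [Fintype V] (G : SimpleGraph V)
    (hG : Indep2 G) (H : G.Subgraph) (hne : H.verts.Nonempty)
    (hproper : H ≠ ⊤) (hf : subFreedom H = 2) :
    (ContractionIsSimple G H → Indep2 (contractGraph G H)) ∧
    ((∀ K : G.Subgraph, K.verts.Nonempty → subFreedom K = 2 → H ≤ K → K = H) →
      H.IsInduced ∧ ContractionIsSimple G H) := by
  obtain ⟨d, hd⟩ := hne
  constructor
  · -- Part (a)
    intro _hsimple K' hK'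
    by_cases hnone : (none : Option {v : V // v ∉ H.verts}) ∈ K'.verts
    · -- v* is a vertex of K'; lift K' together with all of H
      have hverts' : K'.verts =
          insert none (some '' {a : {v : V // v ∉ H.verts} | some a ∈ K'.verts}) := by
        ext x
        rcases x with _ | a <;> simp [hnone]
      have hVcard : K'.verts.ncard =
          {a : {v : V // v ∉ H.verts} | some a ∈ K'.verts}.ncard + 1 := by
        conv_lhs => rw [hverts']
        rw [Set.ncard_insert_of_notMem (by simp) (Set.toFinite _),
          Set.ncard_image_of_injective _ (Option.some_injective _)]
      have hdisj : Disjoint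
          (Subtype.val '' {a : {v : V // v ∉ H.verts} | some a ∈ K'.verts}) H.verts := by
        rw [Set.disjoint_left]
        rintro x ⟨a, _, rfl⟩ hx
        exact a.2 hx
      have hKVcard : (liftSub H K').verts.ncard =
          {a : {v : V // v ∉ H.verts} | some a ∈ K'.verts}.ncard + H.verts.ncard := by
        show (Subtype.val '' {a : {v : V // v ∉ H.verts} | some a ∈ K'.verts}
          ∪ H.verts).ncard = _
        rw [Set.ncard_union_eq hdisj (Set.toFinite _) (Set.toFinite _),
          Set.ncard_image_of_injective _ Subtype.val_injective]
      have hKedge : (liftSub H K').edgeSet = H.edgeSet ∪ psi H d '' K'.edgeSet := by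
        apply Set.Subset.antisymm
        · intro e he
          revert he
          induction e using Sym2.ind with
          | _ a b =>
            intro he
            rw [Subgraph.mem_edgeSet] at he
            rcases he with h | ⟨a', b', h, rfl, rfl⟩ | ⟨a', h, rfl, rfl⟩ | ⟨b', h, rfl, rfl⟩
            · exact Or.inl h
            · exact Or.inr ⟨s(some a', some b'), h, rfl⟩
            · exact Or.inr ⟨s(some a', none), h, rfl⟩
            · exact Or.inr ⟨s(some b', none), h, Sym2.eq_swap⟩
        · rintro e (he | ⟨e', he', rfl⟩)
          · revert he
            induction e using Sym2.ind with
            | _ a b =>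
              intro he
              rw [Subgraph.mem_edgeSet] at he ⊢
              exact Or.inl he
          · rcases edge_normal he' with ⟨a, b, h, rfl⟩ | ⟨a, h, rfl⟩ <;>
              simp only [psi_mk, psiFun]
            · exact Subgraph.mem_edgeSet.2 (Or.inr (Or.inl ⟨a, b, h, rfl, rfl⟩))
            · exact Subgraph.mem_edgeSet.2 (Or.inr (Or.inr (Or.inl ⟨a, h, rfl, rfl⟩)))
      have hedisj : Disjoint H.edgeSet (psi H d '' K'.edgeSet) := by
        rw [Set.disjoint_right]
        rintro e ⟨e', he', rfl⟩ hH
        rcases edge_normal he' with ⟨a, b, h, rfl⟩ | ⟨a, h, rfl⟩ <;>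
          simp only [psi_mk, psiFun] at hH
        · exact a.2 (H.edge_vert (Subgraph.mem_edgeSet.1 hH))
        · exact a.2 (H.edge_vert (Subgraph.mem_edgeSet.1 hH))
      have hEcard : (liftSub H K').edgeSet.ncard
          = H.edgeSet.ncard + K'.edgeSet.ncard := by
        rw [hKedge, Set.ncard_union_eq hedisj (Set.toFinite _) (Set.toFinite _),
          Set.ncard_image_of_injOn (psi_injOn H d K')]
      have h2 := hG (liftSub H K') ⟨d, Or.inr hd⟩
      simp only [subFreedom] at h2 hf ⊢
      rw [hKVcard, hEcard] at h2
      rw [hVcard]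
      push_cast at h2 hf ⊢
      linarith
    · -- v* is not a vertex of K'
      have hverts' : K'.verts =
          some '' {a : {v : V // v ∉ H.verts} | some a ∈ K'.verts} := by
        ext x
        rcases x with _ | a <;> simp [hnone]
      have hVcard : K'.verts.ncard =
          {a : {v : V // v ∉ H.verts} | some a ∈ K'.verts}.ncard := by
        conv_lhs => rw [hverts']
        rw [Set.ncard_image_of_injective _ (Option.some_injective _)]
      have hKVcard : (liftSub0 H K').verts.ncard =
          {a : {v : V // v ∉ H.verts} | some a ∈ K'.verts}.ncard := by
        show (Subtype.val '' {a : {v : V // v ∉ H.verts} | some a ∈ K'.verts}).ncard = _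
        rw [Set.ncard_image_of_injective _ Subtype.val_injective]
      have hKedge : (liftSub0 H K').edgeSet = psi H d '' K'.edgeSet := by
        apply Set.Subset.antisymm
        · intro e he
          revert he
          induction e using Sym2.ind with
          | _ a b =>
            intro he
            rw [Subgraph.mem_edgeSet] at he
            obtain ⟨a', b', h, rfl, rfl⟩ := he
            exact ⟨s(some a', some b'), h, rfl⟩
        · rintro e ⟨e', he', rfl⟩
          rcases edge_normal he' with ⟨a, b, h, rfl⟩ | ⟨a, h, rfl⟩
          · simp only [psi_mk, psiFun]
            exact Subgraph.mem_edgeSet.2 ⟨a, b, h, rfl, rfl⟩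
          · exact absurd (K'.edge_vert (K'.adj_symm h)) hnone
      have hEcard : (liftSub0 H K').edgeSet.ncard = K'.edgeSet.ncard := by
        rw [hKedge, Set.ncard_image_of_injOn (psi_injOn H d K')]
      obtain ⟨x, hx⟩ := hK'
      have hxne : (liftSub0 H K').verts.Nonempty := by
        rcases x with _ | a
        · exact absurd hx hnone
        · exact ⟨a.1, ⟨a, hx, rfl⟩⟩
      have h2 := hG (liftSub0 H K') hxne
      simp only [subFreedom] at h2 ⊢
      rw [hKVcard, hEcard] at h2
      rw [hVcard]
      exact h2
  · -- Part (b)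
    intro hmax
    have hind : H.IsInduced := by
      intro v hv w hw hadj
      by_contra hVW
      have hK1v : (addEdge H v w hadj).verts = H.verts := by
        show insert v (insert w H.verts) = H.verts
        rw [Set.insert_eq_self.2 hw, Set.insert_eq_self.2 hv]
      have hK1e : (addEdge H v w hadj).edgeSet.ncard = H.edgeSet.ncard + 1 := by
        rw [addEdge_edgeSet,
          Set.ncard_insert_of_notMem (fun hmem => hVW (Subgraph.mem_edgeSet.1 hmem))
            (Set.toFinite _)]
      have h2 := hG (addEdge H v w hadj) ⟨v, by rw [hK1v]; exact hv⟩
      simp only [subFreedom] at h2 hf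
      rw [hK1v, hK1e] at h2
      push_cast at h2 hf
      linarith
    refine ⟨hind, fun a b ha hb hab => hind ha hb hab, ?_⟩
    intro x hx w1 w2 hw1 hw2 hxw1 hxw2
    by_contra hww
    have hK2v : (addEdge (addEdge H x w1 hxw1) x w2 hxw2).verts = insert x H.verts := by
      show insert x (insert w2 (insert x (insert w1 H.verts))) = insert x H.verts
      rw [Set.insert_eq_self.2 hw1, Set.insert_comm w2 x, Set.insert_idem,
        Set.insert_eq_self.2 hw2]
    have hK2Vcard : (addEdge (addEdge H x w1 hxw1) x w2 hxw2).verts.ncard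
        = H.verts.ncard + 1 := by
      rw [hK2v, Set.ncard_insert_of_notMem hx (Set.toFinite _)]
    have hxw1mem : s(x, w1) ∉ H.edgeSet :=
      fun h => hx (H.edge_vert (Subgraph.mem_edgeSet.1 h))
    have hxw2mem : s(x, w2) ∉ insert s(x, w1) H.edgeSet := by
      rw [Set.mem_insert_iff]
      rintro (h | h)
      · rw [Sym2.eq_iff] at h
        rcases h with ⟨-, h⟩ | ⟨h, -⟩
        · exact hww h.symm
        · exact hx (h ▸ hw1)
      · exact hx (H.edge_vert (Subgraph.mem_edgeSet.1 h))
    have hK2Ecard : (addEdge (addEdge H x w1 hxw1) x w2 hxw2).edgeSet.ncard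
        = H.edgeSet.ncard + 2 := by
      rw [addEdge_edgeSet, addEdge_edgeSet,
        Set.ncard_insert_of_notMem hxw2mem (Set.toFinite _),
        Set.ncard_insert_of_notMem hxw1mem (Set.toFinite _)]
    have hxK : x ∈ (addEdge (addEdge H x w1 hxw1) x w2 hxw2).verts := by
      rw [hK2v]; exact Set.mem_insert x _
    have hfK2 : subFreedom (addEdge (addEdge H x w1 hxw1) x w2 hxw2) = 2 := by
      simp only [subFreedom] at hf ⊢
      rw [hK2Vcard, hK2Ecard]
      push_cast at hf ⊢
      linarith
    have hle : H ≤ addEdge (addEdge H x w1 hxw1) x w2 hxw2 :=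
      le_trans (le_addEdge H x w1 hxw1) (le_addEdge _ x w2 hxw2)
    have heq := hmax _ ⟨x, hxK⟩ hfK2 hle
    rw [heq] at hxK
    exact hx hxK
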